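/- For every prime p and every positive integer n, one has the identity in ℚ: C(n·p, p) = n · Σ_{j=0}^{p−1} ((n−1)·p)^j · H_{p−1}(1^j). -/

import Mathlib

/-- Multiple harmonic sum `H_N(s₁,…,s_k)`. -/
def mhs : ℕ → List ℕ → ℚ
  | _, [] => 1
  | N, s :: t => ∑ n ∈ Finset.Icc 1 N, (1 / (n : ℚ) ^ s) * mhs (n - 1) t

lemma mhs_rec (N j : ℕ) :
    mhs (N + 1) (List.replicate (j + 1) 1)
      = mhs N (List.replicate (j + 1) 1)
        + (1 / ((N : ℚ) + 1)) * mhs N (List.replicate j 1) := by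
  rw [List.replicate_succ, mhs, mhs,
    Finset.sum_Icc_succ_top (by omega : 1 ≤ N + 1)]
  simp [pow_one]

lemma mhs_zero (N : ℕ) : ∀ j, N < j → mhs N (List.replicate j 1) = 0 := by
  induction N with
  | zero =>
    intro j hj
    cases j with
    | zero => omega
    | succ j => rw [List.replicate_succ, mhs]; simp
  | succ N ih =>
    intro j hj
    cases j with
    | zero => omega
    | succ j =>
      rw [mhs_rec, ih j (by omega), ih (j+1) (by omega)]
      ring

lemma mhs_sum (x : ℚ) (N : ℕ) :
    ∑ j ∈ Finset.range (N + 1), x ^ j * mhs N (List.replicate j 1)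
      = ∏ i ∈ Finset.Icc 1 N, (1 + x / (i : ℚ)) := by
  induction N with
  | zero => simp [mhs]
  | succ N ih =>
    rw [Finset.prod_Icc_succ_top (by omega : 1 ≤ N + 1), ← ih,
      Finset.sum_range_succ']
    have h1 : ∑ j ∈ Finset.range (N + 1),
        x ^ (j + 1) * mhs (N + 1) (List.replicate (j + 1) 1)
        = ∑ j ∈ Finset.range (N + 1),
          (x ^ (j + 1) * mhs N (List.replicate (j + 1) 1)
            + (x / ((N : ℚ) + 1)) * (x ^ j * mhs N (List.replicate j 1))) := by
      refine Finset.sum_congr rfl fun j _ => ?_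
      rw [mhs_rec]; ring
    rw [h1, Finset.sum_add_distrib, ← Finset.mul_sum]
    have h2 : ∑ j ∈ Finset.range (N + 1),
        x ^ (j + 1) * mhs N (List.replicate (j + 1) 1)
        = ∑ j ∈ Finset.range N, x ^ (j + 1) * mhs N (List.replicate (j + 1) 1) := by
      rw [Finset.sum_range_succ, mhs_zero N (N+1) (by omega), mul_zero, add_zero]
    have h3 : (∑ j ∈ Finset.range N, x ^ (j + 1) * mhs N (List.replicate (j + 1) 1))
        + x ^ 0 * mhs N (List.replicate 0 1)
        = ∑ j ∈ Finset.range (N + 1), x ^ j * mhs N (List.replicate j 1) := by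
      rw [Finset.sum_range_succ']
    have h0 : mhs (N + 1) (List.replicate 0 1) = mhs N (List.replicate 0 1) := rfl
    simp only [List.replicate_zero] at h3
    rw [h2, h0]
    push_cast
    linear_combination h3

lemma fact_prod (m : ℕ) : ∀ p : ℕ,
    m.factorial * ∏ i ∈ Finset.Icc 1 p, (m + i) = (m + p).factorial := by
  intro p
  induction p with
  | zero => simp
  | succ p ih =>
    rw [Finset.prod_Icc_succ_top (by omega : 1 ≤ p + 1), ← mul_assoc, ih,
      ← Nat.add_assoc, Nat.factorial_succ]
    ring

lemma choose_nat_id (N n : ℕ) (hn : 1 ≤ n) :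
    Nat.choose (n * (N + 1)) (N + 1) * N.factorial
      = n * ∏ i ∈ Finset.Icc 1 N, ((n - 1) * (N + 1) + i) := by
  set m := (n - 1) * (N + 1) with hm
  have hsub : n * (N + 1) - (N + 1) = m := by
    rw [hm]; cases n with
    | zero => omega
    | succ n => simp [Nat.succ_mul, Nat.add_sub_cancel]
  have h1 : Nat.choose (n * (N + 1)) (N + 1) * (N + 1).factorial * m.factorial
      = (n * (N + 1)).factorial := by
    rw [← hsub]
    exact Nat.choose_mul_factorial_mul_factorial (Nat.le_mul_of_pos_left _ (by omega))
  have h2 : m.factorial * ∏ i ∈ Finset.Icc 1 (N + 1), (m + i)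
      = (n * (N + 1)).factorial := by
    rw [fact_prod]
    congr 1
    cases n with
    | zero => omega
    | succ n => rw [hm]; simp [Nat.succ_mul]
  have h3 : ∏ i ∈ Finset.Icc 1 (N + 1), (m + i)
      = (∏ i ∈ Finset.Icc 1 N, (m + i)) * (n * (N + 1)) := by
    rw [Finset.prod_Icc_succ_top (by omega : 1 ≤ N + 1)]
    congr 1
    cases n with
    | zero => omega
    | succ n => rw [hm]; simp [Nat.succ_mul]
  have hmf : 0 < m.factorial := Nat.factorial_pos m
  have key : Nat.choose (n * (N + 1)) (N + 1) * (N + 1).factorial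
      = (∏ i ∈ Finset.Icc 1 N, (m + i)) * (n * (N + 1)) := by
    have := h1.trans h2.symm
    rw [h3] at this
    exact Nat.eq_of_mul_eq_mul_right hmf (by linarith [this])
  have : Nat.choose (n * (N + 1)) (N + 1) * N.factorial * (N + 1)
      = n * (∏ i ∈ Finset.Icc 1 N, (m + i)) * (N + 1) := by
    rw [Nat.factorial_succ] at key
    nlinarith [key]
  exact Nat.eq_of_mul_eq_mul_right (by omega) this

/-- For every prime `p` and positive integer `n`,
`C(np, p) = n · ∑_{j=0}^{p−1} ((n−1)p)^j · H_{p−1}(1^j)` in `ℚ`. -/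
theorem choose_np_p_eq_mhs_series (p n : ℕ) (hp : p.Prime) (hn : 1 ≤ n) :
    (Nat.choose (n * p) p : ℚ) =
      (n : ℚ) * ∑ j ∈ Finset.range p,
        (((n : ℚ) - 1) * (p : ℚ)) ^ j * mhs (p - 1) (List.replicate j 1) := by
  obtain ⟨N, rfl⟩ : ∃ N, p = N + 1 := ⟨p - 1, by have := hp.pos; omega⟩
  have hN : (N + 1) - 1 = N := rfl
  rw [hN, mhs_sum]
  have hm : ∀ i ∈ Finset.Icc 1 N,
      (1 : ℚ) + ((n : ℚ) - 1) * ((N : ℕ) + 1 : ℕ) / (i : ℚ)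
        = (((n - 1) * (N + 1) + i : ℕ) : ℚ) / (i : ℚ) := by
    intro i hi
    have hi1 : 1 ≤ i := (Finset.mem_Icc.mp hi).1
    have hiq : (i : ℚ) ≠ 0 := by positivity
    field_simp
    push_cast [Nat.cast_sub hn]
    ring
  rw [Finset.prod_congr rfl hm, Finset.prod_div_distrib]
  have hfac : ∏ i ∈ Finset.Icc 1 N, (i : ℚ) = (N.factorial : ℚ) := by
    rw [← Nat.cast_prod, ← Finset.Ico_add_one_right_eq_Icc, Finset.prod_Ico_id_eq_factorial]
  rw [hfac, ← Nat.cast_prod]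
  have hkey := choose_nat_id N n hn
  have hNf : (N.factorial : ℚ) ≠ 0 := by positivity
  field_simp
  exact_mod_cast hkey
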